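/- arXiv:1903.12027 — 2 statements merged into one kernel-verified Lean document; each statement's English description precedes it below -/
import Mathlib

section
/- Let X be a finite set and p : X → ℝ≥0 a probability mass function with p(x) > 0 for all x. For N ∈ ℕ, equip X^N with the product measure p^N(x₁,…,x_N) = ∏_i p(x_i), and let H = −∑_{x∈X} p(x) log p(x) be the Shannon entropy. Then for every ε > 0, lim_{N→∞} p^N({ (x₁,…,x_N) : |−(1/N) log p^N(x₁,…,x_N) − H| > ε }) = 0. -/
open Finset Filter Real

/-- Sum over a finite product space of a product of per-coordinate functions
factors as a product of sums. -/
lemma sum_pi_prod_aux {X : Type*} [Fintype X] (N : ℕ) (g : Fin N → X → ℝ) :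
    ∑ x : Fin N → X, ∏ i, g i (x i) = ∏ i, ∑ a, g i a := by
  rw [Finset.prod_univ_sum]
  rw [Fintype.piFinset_univ]

/-- Asymptotic equipartition property (AEP) for i.i.d. sequences: the product
measure of the set of sequences whose empirical entropy rate deviates from the
Shannon entropy `H` by more than `ε` tends to zero. -/
theorem aep_iid {X : Type*} [Fintype X] (p : X → ℝ) (hp : ∀ x, 0 < p x)
    (hsum : ∑ x, p x = 1) (ε : ℝ) (hε : 0 < ε) :
    Tendsto (fun N : ℕ =>
      ∑ x ∈ Finset.univ.filter (fun x : Fin N → X =>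
          ε < |-(1 / (N : ℝ)) * Real.log (∏ i, p (x i))
                - (-∑ a, p a * Real.log (p a))|),
          ∏ i, p (x i))
      atTop (nhds 0) := by
  set f : X → ℝ := fun a => -Real.log (p a) with hf
  set H : ℝ := -∑ a, p a * Real.log (p a) with hH
  set σ2 : ℝ := ∑ a, p a * (f a - H) ^ 2 with hσ
  have hpne : ∀ a, p a ≠ 0 := fun a => (hp a).ne'
  have hpf : ∑ a, p a * f a = H := by
    simp [hf, hH, mul_neg, Finset.sum_neg_distrib]
  have hpfH : ∑ a, p a * (f a - H) = 0 := by
    simp only [mul_sub, Finset.sum_sub_distrib, hpf, ← Finset.sum_mul, hsum]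
    ring
  -- variance identity
  have var : ∀ N : ℕ,
      ∑ x : Fin N → X, (∏ i, p (x i)) * (∑ i, (f (x i) - H)) ^ 2 = N * σ2 := by
    intro N
    have expand : ∀ x : Fin N → X,
        (∏ i, p (x i)) * (∑ i, (f (x i) - H)) ^ 2
          = ∑ i, ∑ j, ∏ k, (p (x k) * (if k = i then f (x k) - H else 1)
              * (if k = j then f (x k) - H else 1)) := by
      intro x
      rw [sq, Finset.sum_mul_sum, Finset.mul_sum]
      refine Finset.sum_congr rfl fun i _ => ?_
      rw [Finset.mul_sum]
      refine Finset.sum_congr rfl fun j _ => ?_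
      rw [Finset.prod_mul_distrib, Finset.prod_mul_distrib,
        Finset.prod_ite_eq' Finset.univ i (fun k => f (x k) - H),
        Finset.prod_ite_eq' Finset.univ j (fun k => f (x k) - H)]
      simp [mul_assoc]
    calc ∑ x : Fin N → X, (∏ i, p (x i)) * (∑ i, (f (x i) - H)) ^ 2
        = ∑ i : Fin N, ∑ j : Fin N, ∑ x : Fin N → X,
            ∏ k, (p (x k) * (if k = i then f (x k) - H else 1)
              * (if k = j then f (x k) - H else 1)) := by
          rw [Finset.sum_congr rfl fun x _ => expand x, Finset.sum_comm]
          exact Finset.sum_congr rfl fun i _ => Finset.sum_comm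
      _ = ∑ i : Fin N, ∑ j : Fin N, (if i = j then σ2 else 0) := by
          refine Finset.sum_congr rfl fun i _ => Finset.sum_congr rfl fun j _ => ?_
          rw [sum_pi_prod_aux N (fun k a => p a * (if k = i then f a - H else 1)
            * (if k = j then f a - H else 1))]
          by_cases hij : i = j
          · subst hij
            simp only [if_pos rfl]
            have : ∀ k : Fin N, (∑ a, p a * (if k = i then f a - H else 1)
                * (if k = i then f a - H else 1)) = if k = i then σ2 else 1 := by
              intro k
              by_cases hk : k = i
              · simp [hk, hσ, sq, mul_assoc]
              · simp [hk, hsum]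
            rw [Finset.prod_congr rfl fun k _ => this k,
              Finset.prod_ite_eq' Finset.univ i (fun _ => σ2)]
            simp
          · rw [if_neg hij]
            refine Finset.prod_eq_zero (Finset.mem_univ i) ?_
            simp only [if_pos rfl, if_neg hij, mul_one]
            exact hpfH
      _ = N * σ2 := by simp [Finset.sum_ite_eq, mul_comm]
  -- weights are nonnegative
  have wnn : ∀ (N : ℕ) (x : Fin N → X), (0:ℝ) ≤ ∏ i, p (x i) :=
    fun N x => Finset.prod_nonneg fun i _ => (hp _).le
  -- Chebyshev bound
  have key : ∀ N : ℕ, 0 < N →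
      (∑ x ∈ Finset.univ.filter (fun x : Fin N → X =>
          ε < |-(1 / (N : ℝ)) * Real.log (∏ i, p (x i))
                - (-∑ a, p a * Real.log (p a))|),
          ∏ i, p (x i)) ≤ σ2 / (N * ε ^ 2) := by
    intro N hN
    have hNR : (0:ℝ) < N := Nat.cast_pos.mpr hN
    set B := Finset.univ.filter (fun x : Fin N → X =>
          ε < |-(1 / (N : ℝ)) * Real.log (∏ i, p (x i))
                - (-∑ a, p a * Real.log (p a))|) with hB
    have hdev : ∀ x ∈ B, ((N:ℝ) * ε) ^ 2 ≤ (∑ i, (f (x i) - H)) ^ 2 := by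
      intro x hx
      rw [hB, Finset.mem_filter] at hx
      have hx' := hx.2
      have hrw : -(1 / (N : ℝ)) * Real.log (∏ i, p (x i))
            - (-∑ a, p a * Real.log (p a)) = (∑ i, (f (x i) - H)) / N := by
        rw [Real.log_prod (fun i _ => hpne (x i))]
        rw [Finset.sum_sub_distrib]
        simp only [hf, Finset.sum_neg_distrib, Finset.sum_const, Finset.card_univ,
          Fintype.card_fin, nsmul_eq_mul]
        field_simp
        rw [hH]
        ring
      rw [hrw] at hx'
      have habs : |(∑ i, (f (x i) - H)) / N| = |∑ i, (f (x i) - H)| / N := by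
        rw [abs_div, abs_of_pos hNR]
      rw [habs] at hx'
      have h1 : (N:ℝ) * ε ≤ |∑ i, (f (x i) - H)| := by
        rw [lt_div_iff₀ hNR] at hx'
        linarith
      calc ((N:ℝ) * ε) ^ 2 ≤ |∑ i, (f (x i) - H)| ^ 2 := by
            apply pow_le_pow_left₀ (by positivity) h1
        _ = (∑ i, (f (x i) - H)) ^ 2 := sq_abs _
    have step1 : ((N:ℝ) * ε) ^ 2 * (∑ x ∈ B, ∏ i, p (x i)) ≤ N * σ2 := by
      rw [Finset.mul_sum]
      calc ∑ x ∈ B, ((N:ℝ) * ε) ^ 2 * ∏ i, p (x i)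
          ≤ ∑ x ∈ B, (∏ i, p (x i)) * (∑ i, (f (x i) - H)) ^ 2 := by
            refine Finset.sum_le_sum fun x hx => ?_
            rw [mul_comm]
            exact mul_le_mul_of_nonneg_left (hdev x hx) (wnn N x)
        _ ≤ ∑ x : Fin N → X, (∏ i, p (x i)) * (∑ i, (f (x i) - H)) ^ 2 := by
            refine Finset.sum_le_sum_of_subset_of_nonneg (Finset.filter_subset _ _)
              fun x _ _ => ?_
            exact mul_nonneg (wnn N x) (sq_nonneg _)
        _ = N * σ2 := var N
    have hNε : (0:ℝ) < ((N:ℝ) * ε) ^ 2 := by positivity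
    rw [← le_div_iff₀' hNε] at step1
    calc (∑ x ∈ B, ∏ i, p (x i)) ≤ N * σ2 / ((N:ℝ) * ε) ^ 2 := step1
      _ = σ2 / (N * ε ^ 2) := by
          field_simp
  -- squeeze
  have h0 : ∀ N : ℕ, (0:ℝ) ≤ ∑ x ∈ Finset.univ.filter (fun x : Fin N → X =>
          ε < |-(1 / (N : ℝ)) * Real.log (∏ i, p (x i))
                - (-∑ a, p a * Real.log (p a))|),
          ∏ i, p (x i) :=
    fun N => Finset.sum_nonneg fun x _ => wnn N x
  have hbound : Tendsto (fun N : ℕ => σ2 / ((N:ℝ) * ε ^ 2)) atTop (nhds 0) := by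
    have : (fun N : ℕ => σ2 / ((N:ℝ) * ε ^ 2))
        = fun N : ℕ => (σ2 / ε ^ 2) * (1 / (N:ℝ)) := by
      funext N
      field_simp
    rw [this]
    have := tendsto_one_div_atTop_nhds_zero_nat.const_mul (σ2 / ε ^ 2)
    simpa using this
  refine tendsto_of_tendsto_of_tendsto_of_le_of_le' tendsto_const_nhds hbound
    (Eventually.of_forall fun N => h0 N) ?_
  filter_upwards [eventually_ge_atTop 1] with N hN
  exact key N hN
end

section
/- Let |Ω_N⟩ = |φ₁⟩⊗…⊗|φ_N⟩ be a product of unit vectors in ℂ^d with all amplitudes c_i(x) nonzero, and suppose Var(log|c_i(x_i)|²) ≤ M for each i. Let P_ε^N be the projection onto the span of product basis vectors (x₁,…,x_N) satisfying |−(1/N) log|c_{x₁…x_N}|² − H_N| > ε, where H_N = −(1/N)∑_i ∑_x |c_i(x)|² log|c_i(x)|². Then ‖P_ε^N |Ω_N⟩‖² ≤ M/(N ε²), and hence ‖P_ε^N |Ω_N⟩‖² → 0 as N → ∞. -/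
open Finset Filter Real

private lemma sum_pi_prod {N d : ℕ} (q : Fin N → Fin d → ℝ) :
    ∑ x : Fin N → Fin d, ∏ k, q k (x k) = ∏ k, ∑ y, q k y := by
  rw [Finset.prod_univ_sum]; rfl

private lemma prod_eq_two {α : Type*} [Fintype α] [DecidableEq α] {i j : α}
    (hij : i ≠ j) {h : α → ℝ} (hother : ∀ k, k ≠ i → k ≠ j → h k = 1) :
    ∏ k, h k = h i * h j := by
  rw [← Finset.prod_pair hij]
  exact (Finset.prod_subset (Finset.subset_univ _)
    (fun k _ hk => hother k (fun e => hk (by simp [e])) (fun e => hk (by simp [e])))).symm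

private lemma prod_eq_one' {α : Type*} [Fintype α] [DecidableEq α] (i : α)
    {h : α → ℝ} (hother : ∀ k, k ≠ i → h k = 1) :
    ∏ k, h k = h i := by
  rw [← Finset.prod_singleton (f := h) (a := i)]
  exact (Finset.prod_subset (Finset.subset_univ _)
    (fun k _ hk => hother k (by simpa using hk))).symm

private lemma exp_one {N d : ℕ} (p : ℕ → Fin d → ℝ) (hp : ∀ i, ∑ y, p i y = 1)
    (F : ℕ → Fin d → ℝ) (i : Fin N) :
    ∑ x : Fin N → Fin d, (∏ k, p k.1 (x k)) * F i.1 (x i)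
      = ∑ y, p i.1 y * F i.1 y := by
  have key : ∀ x : Fin N → Fin d, (∏ k, p k.1 (x k)) * F i.1 (x i)
      = ∏ k, (p k.1 (x k) * (if k = i then F k.1 (x k) else 1)) := by
    intro x
    rw [Finset.prod_mul_distrib]
    congr 1
    rw [prod_eq_one' i (h := fun k => if k = i then F k.1 (x k) else 1)
      (fun k hk => by simp [hk])]
    simp
  simp_rw [key]
  rw [sum_pi_prod (fun k y => p k.1 y * if k = i then F k.1 y else 1)]
  rw [prod_eq_one' i (fun k hk => by simp [hk, ← Finset.sum_mul, hp k.1])]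
  simp

private lemma exp_two {N d : ℕ} (p : ℕ → Fin d → ℝ) (hp : ∀ i, ∑ y, p i y = 1)
    (F : ℕ → Fin d → ℝ) (i j : Fin N) (hij : i ≠ j) :
    ∑ x : Fin N → Fin d, (∏ k, p k.1 (x k)) * (F i.1 (x i) * F j.1 (x j))
      = (∑ y, p i.1 y * F i.1 y) * (∑ y, p j.1 y * F j.1 y) := by
  have key : ∀ x : Fin N → Fin d, (∏ k, p k.1 (x k)) * (F i.1 (x i) * F j.1 (x j))
      = ∏ k, (p k.1 (x k) * (if k = i then F k.1 (x k) else if k = j then F k.1 (x k) else 1)) := by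
    intro x
    rw [Finset.prod_mul_distrib]
    congr 1
    rw [prod_eq_two hij (h := fun k => if k = i then F k.1 (x k) else if k = j then F k.1 (x k) else 1)
      (fun k hki hkj => by simp [hki, hkj])]
    simp [hij, hij.symm]
  simp_rw [key]
  rw [sum_pi_prod (fun k y => p k.1 y * if k = i then F k.1 y else if k = j then F k.1 y else 1)]
  rw [prod_eq_two hij (fun k hki hkj => by simp [hki, hkj, ← Finset.sum_mul, hp k.1])]
  simp [hij, hij.symm]

private lemma variance_sum {N d : ℕ} (p : ℕ → Fin d → ℝ) (hp : ∀ i, ∑ y, p i y = 1)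
    (g : ℕ → Fin d → ℝ) (hmean : ∀ i : ℕ, ∑ y, p i y * g i y = 0) :
    ∑ x : Fin N → Fin d, (∏ k, p k.1 (x k)) * (∑ i : Fin N, g i.1 (x i)) ^ 2
      = ∑ i : Fin N, ∑ y, p i.1 y * g i.1 y ^ 2 := by
  have expand : ∀ x : Fin N → Fin d, (∏ k, p k.1 (x k)) * (∑ i : Fin N, g i.1 (x i)) ^ 2
      = ∑ i : Fin N, ∑ j : Fin N, (∏ k, p k.1 (x k)) * (g i.1 (x i) * g j.1 (x j)) := by
    intro x
    rw [sq, Finset.sum_mul_sum, Finset.mul_sum]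
    refine Finset.sum_congr rfl fun i _ => ?_
    rw [Finset.mul_sum]
  simp_rw [expand]
  rw [Finset.sum_comm]
  refine Finset.sum_congr rfl fun i _ => ?_
  rw [Finset.sum_comm]
  have step : ∀ j : Fin N,
      (∑ x : Fin N → Fin d, (∏ k, p k.1 (x k)) * (g i.1 (x i) * g j.1 (x j)))
        = if j = i then ∑ y, p i.1 y * g i.1 y ^ 2 else 0 := by
    intro j
    by_cases h : j = i
    · subst h
      rw [if_pos rfl]
      have := exp_one p hp (fun n y => g n y * g n y) j
      simpa [sq] using this
    · rw [if_neg h, exp_two p hp g i j (fun e => h e.symm), hmean i.1]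
      simp
  simp_rw [step]
  simp

/-- Main theorem: for a universe of `N` subsystems in an arbitrary product
state with uniformly bounded single-factor variances of `log|cᵢ|²`, the
squared norm of the maverick (non-typical) component is at most `M/(Nε²)`,
and hence tends to `0` as `N → ∞`. -/
theorem maverick_vanishes_thermodynamic_limit (d : ℕ) (c : ℕ → Fin d → ℂ)
    (hunit : ∀ i, ∑ x, ‖c i x‖ ^ 2 = 1) (hne : ∀ i x, c i x ≠ 0)
    (M : ℝ) (hM : 0 < M)
    (hvar : ∀ i : ℕ, ∑ x, ‖c i x‖ ^ 2 *
        (Real.log (‖c i x‖ ^ 2)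
          - ∑ y, ‖c i y‖ ^ 2 * Real.log (‖c i y‖ ^ 2)) ^ 2 ≤ M)
    (ε : ℝ) (hε : 0 < ε) :
    (∀ N : ℕ, 1 ≤ N →
      ∑ x ∈ Finset.univ.filter (fun x : Fin N → Fin d =>
          ε < |-(1 / (N : ℝ)) * Real.log (∏ i : Fin N, ‖c i.1 (x i)‖ ^ 2)
              - (-(1 / (N : ℝ)) * ∑ i : Fin N, ∑ y,
                  ‖c i.1 y‖ ^ 2 * Real.log (‖c i.1 y‖ ^ 2))|),
          ∏ i : Fin N, ‖c i.1 (x i)‖ ^ 2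
        ≤ M / (N * ε ^ 2)) ∧
    Tendsto (fun N : ℕ =>
      ∑ x ∈ Finset.univ.filter (fun x : Fin N → Fin d =>
          ε < |-(1 / (N : ℝ)) * Real.log (∏ i : Fin N, ‖c i.1 (x i)‖ ^ 2)
              - (-(1 / (N : ℝ)) * ∑ i : Fin N, ∑ y,
                  ‖c i.1 y‖ ^ 2 * Real.log (‖c i.1 y‖ ^ 2))|),
          ∏ i : Fin N, ‖c i.1 (x i)‖ ^ 2)
      atTop (nhds 0) := by
  set p : ℕ → Fin d → ℝ := fun i x => ‖c i x‖ ^ 2 with hp_def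
  have hppos : ∀ i x, 0 < p i x := fun i x => by
    have := norm_pos_iff.2 (hne i x)
    positivity
  set μ : ℕ → ℝ := fun i => ∑ y, p i y * Real.log (p i y) with hμ_def
  set g : ℕ → Fin d → ℝ := fun i y => Real.log (p i y) - μ i with hg_def
  have hmean : ∀ i, ∑ y, p i y * g i y = 0 := by
    intro i
    simp only [hg_def, mul_sub]
    rw [Finset.sum_sub_distrib, ← Finset.sum_mul, hunit i]
    simp [hμ_def]
  have hvar' : ∀ i, ∑ y, p i y * g i y ^ 2 ≤ M := hvar
  -- main bound
  have main : ∀ N : ℕ, 1 ≤ N →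
      ∑ x ∈ Finset.univ.filter (fun x : Fin N → Fin d =>
          ε < |-(1 / (N : ℝ)) * Real.log (∏ i : Fin N, ‖c i.1 (x i)‖ ^ 2)
              - (-(1 / (N : ℝ)) * ∑ i : Fin N, ∑ y,
                  ‖c i.1 y‖ ^ 2 * Real.log (‖c i.1 y‖ ^ 2))|),
          ∏ i : Fin N, ‖c i.1 (x i)‖ ^ 2
        ≤ M / (N * ε ^ 2) := by
    intro N hN
    have hNpos : (0 : ℝ) < N := by exact_mod_cast hN
    have hNe : (N : ℝ) ≠ 0 := ne_of_gt hNpos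
    set T : (Fin N → Fin d) → ℝ := fun x => ∑ i : Fin N, g i.1 (x i) with hT_def
    set P : (Fin N → Fin d) → ℝ := fun x => ∏ i : Fin N, p i.1 (x i) with hP_def
    have hPpos : ∀ x, 0 < P x := fun x => Finset.prod_pos fun i _ => hppos i.1 (x i)
    -- rewrite condition
    have hcond : ∀ x : Fin N → Fin d,
        (ε < |-(1 / (N : ℝ)) * Real.log (∏ i : Fin N, ‖c i.1 (x i)‖ ^ 2)
            - (-(1 / (N : ℝ)) * ∑ i : Fin N, ∑ y,
                ‖c i.1 y‖ ^ 2 * Real.log (‖c i.1 y‖ ^ 2))|)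
        → (N : ℝ) ^ 2 * ε ^ 2 < T x ^ 2 := by
      intro x hx
      have hlog : Real.log (∏ i : Fin N, p i.1 (x i)) = ∑ i : Fin N, Real.log (p i.1 (x i)) :=
        Real.log_prod (fun i _ => ne_of_gt (hppos i.1 (x i)))
      have habs : |-(1 / (N : ℝ)) * Real.log (∏ i : Fin N, ‖c i.1 (x i)‖ ^ 2)
          - (-(1 / (N : ℝ)) * ∑ i : Fin N, ∑ y,
              ‖c i.1 y‖ ^ 2 * Real.log (‖c i.1 y‖ ^ 2))| = (1 / N) * |T x| := by
        have : -(1 / (N : ℝ)) * Real.log (∏ i : Fin N, ‖c i.1 (x i)‖ ^ 2)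
            - (-(1 / (N : ℝ)) * ∑ i : Fin N, ∑ y,
                ‖c i.1 y‖ ^ 2 * Real.log (‖c i.1 y‖ ^ 2)) = -(1 / N) * T x := by
          show -(1 / (N : ℝ)) * Real.log (∏ i : Fin N, p i.1 (x i))
              - (-(1 / (N : ℝ)) * ∑ i : Fin N, μ i.1) = -(1 / N) * T x
          rw [hlog, hT_def]
          simp only [hg_def]
          rw [Finset.sum_sub_distrib]
          ring
        rw [this, abs_mul, abs_neg, abs_of_pos (by positivity : (0:ℝ) < 1 / (N:ℝ))]
      rw [habs] at hx
      have h1 : (N : ℝ) * ε < |T x| := by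
        have h := mul_lt_mul_of_pos_left hx hNpos
        rwa [show (N:ℝ) * (1 / N * |T x|) = |T x| by field_simp] at h
      have h2 : ((N : ℝ) * ε) ^ 2 < |T x| ^ 2 := by
        apply pow_lt_pow_left₀ h1 (by positivity)
        norm_num
      calc (N : ℝ) ^ 2 * ε ^ 2 = ((N:ℝ) * ε) ^ 2 := by ring
        _ < |T x| ^ 2 := h2
        _ = T x ^ 2 := sq_abs _
    -- Chebyshev
    have hvarsum : ∑ x : Fin N → Fin d, P x * T x ^ 2 ≤ N * M := by
      rw [hP_def, hT_def, variance_sum p hunit g hmean]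
      calc ∑ i : Fin N, ∑ y, p i.1 y * g i.1 y ^ 2
          ≤ ∑ _i : Fin N, M := Finset.sum_le_sum fun i _ => hvar' i.1
        _ = N * M := by simp [mul_comm]
    set S := Finset.univ.filter (fun x : Fin N → Fin d =>
        ε < |-(1 / (N : ℝ)) * Real.log (∏ i : Fin N, ‖c i.1 (x i)‖ ^ 2)
            - (-(1 / (N : ℝ)) * ∑ i : Fin N, ∑ y,
                ‖c i.1 y‖ ^ 2 * Real.log (‖c i.1 y‖ ^ 2))|) with hS_def
    have hNε : (0:ℝ) < (N:ℝ) ^ 2 * ε ^ 2 := by positivity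
    have step1 : ∑ x ∈ S, P x ≤ ∑ x ∈ S, P x * T x ^ 2 / ((N:ℝ) ^ 2 * ε ^ 2) := by
      refine Finset.sum_le_sum fun x hx => ?_
      have hxcond := hcond x (by simpa [hS_def] using hx)
      rw [le_div_iff₀ hNε]
      exact mul_le_mul_of_nonneg_left (le_of_lt hxcond) (le_of_lt (hPpos x))
    have step2 : ∑ x ∈ S, P x * T x ^ 2 / ((N:ℝ) ^ 2 * ε ^ 2)
        ≤ ∑ x : Fin N → Fin d, P x * T x ^ 2 / ((N:ℝ) ^ 2 * ε ^ 2) := by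
      refine Finset.sum_le_sum_of_subset_of_nonneg (Finset.filter_subset _ _) ?_
      intro x _ _
      have := hPpos x
      positivity
    have step3 : ∑ x : Fin N → Fin d, P x * T x ^ 2 / ((N:ℝ) ^ 2 * ε ^ 2)
        ≤ M / (N * ε ^ 2) := by
      rw [← Finset.sum_div]
      rw [div_le_div_iff₀ hNε (by positivity)]
      calc (∑ x : Fin N → Fin d, P x * T x ^ 2) * ((N:ℝ) * ε ^ 2)
          ≤ (N * M) * ((N:ℝ) * ε ^ 2) := by
            exact mul_le_mul_of_nonneg_right hvarsum (by positivity)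
        _ = M * ((N:ℝ) ^ 2 * ε ^ 2) := by ring
    calc ∑ x ∈ S, P x ≤ _ := step1
      _ ≤ _ := step2
      _ ≤ M / (N * ε ^ 2) := step3
  refine ⟨main, ?_⟩
  have hub : ∀ᶠ N : ℕ in atTop, (∑ x ∈ Finset.univ.filter (fun x : Fin N → Fin d =>
          ε < |-(1 / (N : ℝ)) * Real.log (∏ i : Fin N, ‖c i.1 (x i)‖ ^ 2)
              - (-(1 / (N : ℝ)) * ∑ i : Fin N, ∑ y,
                  ‖c i.1 y‖ ^ 2 * Real.log (‖c i.1 y‖ ^ 2))|),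
          ∏ i : Fin N, ‖c i.1 (x i)‖ ^ 2) ≤ M / (N * ε ^ 2) := by
    filter_upwards [eventually_ge_atTop 1] with N hN using main N hN
  have hlb : ∀ N : ℕ, 0 ≤ ∑ x ∈ Finset.univ.filter (fun x : Fin N → Fin d =>
          ε < |-(1 / (N : ℝ)) * Real.log (∏ i : Fin N, ‖c i.1 (x i)‖ ^ 2)
              - (-(1 / (N : ℝ)) * ∑ i : Fin N, ∑ y,
                  ‖c i.1 y‖ ^ 2 * Real.log (‖c i.1 y‖ ^ 2))|),
          ∏ i : Fin N, ‖c i.1 (x i)‖ ^ 2 := by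
    intro N
    refine Finset.sum_nonneg fun x _ => Finset.prod_nonneg fun i _ => by positivity
  have htend : Tendsto (fun N : ℕ => M / (N * ε ^ 2)) atTop (nhds 0) := by
    have : (fun N : ℕ => M / (N * ε ^ 2)) = fun N : ℕ => (M / ε ^ 2) / N := by
      funext N
      rw [div_div]
      ring_nf
    rw [this]
    exact tendsto_const_div_atTop_nhds_zero_nat _
  exact squeeze_zero' (Eventually.of_forall hlb) hub htend
end
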